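/- The primitive command connect(x₁.p₁, x₂.p₂) is local: for all composable configurations γ₁ and γ₂ with common store ν, ⟦connect(x₁.p₁, x₂.p₂)⟧(γ₁ • γ₂) ⊆ ⟦connect(x₁.p₁, x₂.p₂)⟧(γ₁) • {γ₂}, where ⟦connect⟧(C, I, ρ, ν) = {(C, I ∪ {(ν(x₁), p₁, ν(x₂), p₂)}, ρ, ν)} provided (ν(x₁), p₁, ν(x₂), p₂) ∉ I (and the composition on the right requires disjointness of interaction sets). -/

import Mathlib

/-- A configuration `(C, I, ρ, ν)`: a finite set of components `C ⊆ ℕ`,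
a finite set of interactions `I` (quadruples component-port-component-port),
a state map `ρ` defined exactly on `C`, and a store `ν : Var → 𝔠`. -/
structure Config (Q P : Type) where
  C : Finset ℕ
  I : Finset (ℕ × P × ℕ × P)
  ρ : ℕ → Option Q
  ν : ℕ → ℕ
  dom : ∀ c, (ρ c).isSome ↔ c ∈ C

namespace Config

variable {Q P : Type} [DecidableEq P]

/-- The composition `γ₁ • γ₂` is defined iff the stores agree and the
component and interaction sets are disjoint. -/
def Defined (γ₁ γ₂ : Config Q P) : Prop :=
  γ₁.ν = γ₂.ν ∧ Disjoint γ₁.C γ₂.C ∧ Disjoint γ₁.I γ₂.I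

/-- Composition: union of components, interactions and state maps. -/
def comp (γ₁ γ₂ : Config Q P) : Config Q P where
  C := γ₁.C ∪ γ₂.C
  I := γ₁.I ∪ γ₂.I
  ρ := fun c => if c ∈ γ₁.C then γ₁.ρ c else γ₂.ρ c
  ν := γ₁.ν
  dom := by
    intro c
    by_cases h : c ∈ γ₁.C <;> simp [h, γ₁.dom, γ₂.dom]

/-- The substructure relation: `γ' ⊑ γ` iff `γ = γ' • γ''` for some `γ''`. -/
def Sub (γ' γ : Config Q P) : Prop := ∃ γ'', Defined γ' γ'' ∧ γ = comp γ' γ''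

end Config

open Config

variable {Q P : Type} [DecidableEq P]

/-- Composition lifted to sets of configurations. -/
def compSet (S T : Set (Config Q P)) : Set (Config Q P) :=
  {γ | ∃ a ∈ S, ∃ b ∈ T, Defined a b ∧ γ = comp a b}

/-- `lift S X`: closure of `S` under arbitrary reassignment of the store
on the variables in `X`. -/
def lift (S : Set (Config Q P)) (X : Set ℕ) : Set (Config Q P) :=
  {γ' | ∃ γ ∈ S, γ'.C = γ.C ∧ γ'.I = γ.I ∧ γ'.ρ = γ.ρ ∧
    ∀ v ∉ X, γ'.ν v = γ.ν v}

/-- Program semantics: a program maps a configuration to either the error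
`⊤` (encoded `none`) or a set of successor configurations. -/
abbrev Sem (Q P : Type) := Config Q P → Option (Set (Config Q P))

/-- Inclusion of results, where the error `⊤` (= `none`) is the top element. -/
def RLE : Option (Set (Config Q P)) → Option (Set (Config Q P)) → Prop
  | _, none => True
  | none, some _ => False
  | some S, some T => S ⊆ T

/-- Compose a possibly-erroneous result with a set of frames; `⊤` absorbs. -/
def ocomp : Option (Set (Config Q P)) → Set (Config Q P) → Option (Set (Config Q P))
  | none, _ => none
  | some S, T => some (compSet S T)

/-- `R` is local: `⟦R⟧(γ₁ • γ₂) ⊆ ⟦R⟧(γ₁) • lift({γ₂}, mod(R))`. -/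
def IsLocal (sem : Sem Q P) (mods : Set ℕ) : Prop :=
  ∀ γ₁ γ₂, Defined γ₁ γ₂ →
    RLE (sem (comp γ₁ γ₂)) (ocomp (sem γ₁) (lift {γ₂} mods))

/-- Validity of the Hoare triple `{φ} R {ψ}`: no error, and all successors
of models of `φ` satisfy `ψ`. -/
def Valid (φ : Config Q P → Prop) (sem : Sem Q P) (ψ : Config Q P → Prop) : Prop :=
  ∀ γ, φ γ → ∃ S, sem γ = some S ∧ ∀ γ' ∈ S, ψ γ'

/-- Separated conjunction of (semantic) formulas. -/
def SepSat (φ₁ φ₂ : Config Q P → Prop) (γ : Config Q P) : Prop :=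
  ∃ γ₁ γ₂, Defined γ₁ γ₂ ∧ γ = comp γ₁ γ₂ ∧ φ₁ γ₁ ∧ φ₂ γ₂

/-- Semantics of `connect(x₁.p₁, x₂.p₂)` (assuming the added interaction is
not already present): add the interaction `(ν(x₁), p₁, ν(x₂), p₂)`. -/
def connSem (x₁ : ℕ) (p₁ : P) (x₂ : ℕ) (p₂ : P) (γ : Config Q P) :
    Set (Config Q P) :=
  {γ' | γ'.C = γ.C ∧ γ'.I = insert (γ.ν x₁, p₁, γ.ν x₂, p₂) γ.I ∧
    γ'.ρ = γ.ρ ∧ γ'.ν = γ.ν}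

theorem connect_local (x₁ : ℕ) (p₁ : P) (x₂ : ℕ) (p₂ : P)
    (γ₁ γ₂ : Config Q P) (hD : Defined γ₁ γ₂)
    (h₁ : (γ₁.ν x₁, p₁, γ₁.ν x₂, p₂) ∉ γ₁.I)
    (h₂ : (γ₁.ν x₁, p₁, γ₁.ν x₂, p₂) ∉ γ₂.I) :
    connSem x₁ p₁ x₂ p₂ (comp γ₁ γ₂) ⊆
      compSet (connSem x₁ p₁ x₂ p₂ γ₁) {γ₂} := by
  intro γ' hγ'
  obtain ⟨hC, hI, hρ, hν⟩ := hγ'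
  obtain ⟨hνeq, hCdis, hIdis⟩ := hD
  set t : ℕ × P × ℕ × P := (γ₁.ν x₁, p₁, γ₁.ν x₂, p₂) with ht
  refine ⟨⟨γ₁.C, insert t γ₁.I, γ₁.ρ, γ₁.ν, γ₁.dom⟩, ⟨rfl, rfl, rfl, rfl⟩, γ₂, rfl,
    ⟨hνeq, hCdis, ?_⟩, ?_⟩
  · rw [Finset.disjoint_left]
    intro a ha
    rcases Finset.mem_insert.mp ha with h | h
    · subst h; exact h₂
    · exact Finset.disjoint_left.mp hIdis h
  · cases γ'
    simp only [comp] at *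
    subst hC hρ hν
    congr 1
    rw [hI]; ext a; simp [Finset.mem_insert, or_assoc, ht]
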